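/- Let m ≥ 0, let n ≥ 0, let ε_2, …, ε_{m+2} ∈ {0,1}, and suppose ε_i = 1 for some fixed i with 2 ≤ i ≤ m+2. Then the map τ_i sending (0, α_2, α_3, …) to (0, α_2, …, α_{i-1}, α_i − 2^{m+2-i}, α_{i+1}, …) is a bijection from P_{m,0}^{ε_2,…,ε_i,…,ε_{m+2}}(n) onto P_{m,0}^{ε_2,…,0,…,ε_{m+2}}(n − 2^{m+1}), where in the target the superscript in position i is replaced by 0. In particular these two sets have the same cardinality. -/

import Mathlib

/-- The integer partitioned by the binary partition `α`, where `α i` is the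
number of parts equal to `2 ^ i` (so `α i` is the `α_{i+1}` of the paper). -/
def binWeight (α : ℕ →₀ ℕ) : ℕ := α.sum fun i a => a * 2 ^ i

/-- `Pm m n` is the set of binary partitions of `n` satisfying the divisibility
conditions `2 ^ (m + 2 - i) ∣ α_i` for `1 ≤ i ≤ m + 1` (written here with the
index shifted down by one).  For `n < 0` the set is empty. -/
def Pm (m : ℕ) (n : ℤ) : Set (ℕ →₀ ℕ) :=
  {α | (binWeight α : ℤ) = n ∧ ∀ i ≤ m, 2 ^ (m + 1 - i) ∣ α i}

/-- `Pm0 m n ε` is the set `P_{m,0}^{ε₂,…,ε_{m+2}}(n)` of partitions in `Pm m n`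
with `α₁ = 0` and `α_i ≡ ε_i · 2^(m+2-i) (mod 2^(m+3-i))` for `2 ≤ i ≤ m + 2`;
all indices (of both `α` and `ε`) are shifted down by one here, so the
congruences read `α i ≡ ε i · 2^(m+1-i) (mod 2^(m+2-i))` for `1 ≤ i ≤ m + 1`. -/
def Pm0 (m : ℕ) (n : ℤ) (ε : ℕ → ℕ) : Set (ℕ →₀ ℕ) :=
  {α | α ∈ Pm m n ∧ α 0 = 0 ∧
    ∀ i, 1 ≤ i → i ≤ m + 1 → α i ≡ ε i * 2 ^ (m + 1 - i) [MOD 2 ^ (m + 2 - i)]}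

lemma binWeight_update (α : ℕ →₀ ℕ) (i b : ℕ) :
    binWeight (α.update i b) + α i * 2 ^ i = binWeight α + b * 2 ^ i :=
  Finsupp.sum_update_add α i b (fun j a => a * 2 ^ j) (by simp)
    (fun j a₁ a₂ => add_mul a₁ a₂ _)

/-- Lemma (τ_i): for `2 ≤ i ≤ m + 2` with `ε_i = 1` (index shifted down by one
here, so `1 ≤ i ≤ m + 1`), the map subtracting `2^(m+2-i)` (here `2^(m+1-i)`)
from the `i`-th entry is a bijection from `P_{m,0}^{ε₂,…,ε_i,…,ε_{m+2}}(n)` onto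
`P_{m,0}^{ε₂,…,0,…,ε_{m+2}}(n - 2^(m+1))`; in particular the two sets have the
same cardinality. -/
theorem stmt7 (m n : ℕ) (ε : ℕ → ℕ)
    (hε : ∀ j, 1 ≤ j → j ≤ m + 1 → ε j = 0 ∨ ε j = 1)
    (i : ℕ) (hi1 : 1 ≤ i) (hi2 : i ≤ m + 1) (hεi : ε i = 1) :
    Set.BijOn (fun α : ℕ →₀ ℕ => α.update i (α i - 2 ^ (m + 1 - i)))
      (Pm0 m n ε) (Pm0 m ((n : ℤ) - 2 ^ (m + 1)) (Function.update ε i 0)) ∧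
    Nat.card (Pm0 m n ε) =
      Nat.card (Pm0 m ((n : ℤ) - 2 ^ (m + 1)) (Function.update ε i 0)) := by
  classical
  set c : ℕ := 2 ^ (m + 1 - i) with hc
  have hM : 2 ^ (m + 2 - i) = 2 * c := by
    rw [hc, ← pow_succ']; congr 1; omega
  have hcpos : 0 < c := Nat.pow_pos (by norm_num)
  have hcpow : c * 2 ^ i = 2 ^ (m + 1) := by
    rw [hc, ← pow_add]; congr 1; omega
  set f : (ℕ →₀ ℕ) → (ℕ →₀ ℕ) := fun α => α.update i (α i - c) with hf
  set g : (ℕ →₀ ℕ) → (ℕ →₀ ℕ) := fun β => β.update i (β i + c) with hg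
  set B := Pm0 m ((n : ℤ) - 2 ^ (m + 1)) (Function.update ε i 0) with hB
  -- basic fact: for α ∈ A, c ≤ α i and 2c ∣ α i - c
  have hle : ∀ α ∈ Pm0 m n ε, c ≤ α i := by
    intro α hα
    obtain ⟨_, _, hcong⟩ := hα
    have h1 := hcong i hi1 hi2
    rw [hεi, one_mul, hM] at h1
    have : α i % (2 * c) = c := by
      rw [h1, Nat.mod_eq_of_lt]; omega
    calc c = α i % (2 * c) := this.symm
      _ ≤ α i := Nat.mod_le _ _
  have hdvd : ∀ α ∈ Pm0 m n ε, 2 * c ∣ α i - c := by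
    intro α hα
    obtain ⟨_, _, hcong⟩ := id hα
    have h1 := hcong i hi1 hi2
    rw [hεi, one_mul, hM] at h1
    exact (Nat.modEq_iff_dvd' (hle α hα)).mp h1.symm
  have hmapsf : Set.MapsTo f (Pm0 m n ε) B := by
    intro α hα
    have hle' := hle α hα
    have hdvd' := hdvd α hα
    obtain ⟨⟨hw, hdiv⟩, h0, hcong⟩ := hα
    have hwu := binWeight_update α i (α i - c)
    have hweq : (binWeight (f α) : ℤ) = (n : ℤ) - 2 ^ (m + 1) := by
      have h2 : (binWeight (f α) : ℤ) + (α i : ℤ) * 2 ^ i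
          = (binWeight α : ℤ) + ((α i : ℤ) - c) * 2 ^ i := by
        zify [hle'] at hwu; exact_mod_cast hwu
      have hc2 : (c : ℤ) * 2 ^ i = 2 ^ (m + 1) := by exact_mod_cast hcpow
      rw [hw] at h2
      linarith
    refine ⟨⟨hweq, ?_⟩, ?_, ?_⟩
    · intro j hj
      by_cases hji : j = i
      · subst hji
        have : f α j = α j - c := by simp [hf]
        rw [this]
        exact dvd_trans (dvd_mul_left c 2) hdvd'
      · have : f α j = α j := by simp [hf, Finsupp.coe_update, Function.update_of_ne hji]
        rw [this]; exact hdiv j hj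
    · have : f α 0 = α 0 := by
        simp [hf, Finsupp.coe_update, Function.update_of_ne (by omega : (0:ℕ) ≠ i)]
      rw [this, h0]
    · intro j hj1 hj2
      by_cases hji : j = i
      · subst hji
        have h1 : f α j = α j - c := by simp [hf]
        rw [h1, Function.update_self, zero_mul, hM]
        exact (Nat.modEq_zero_iff_dvd).mpr hdvd'
      · have h1 : f α j = α j := by simp [hf, Finsupp.coe_update, Function.update_of_ne hji]
        rw [h1, Function.update_of_ne hji]
        exact hcong j hj1 hj2
  have hmapsg : Set.MapsTo g B (Pm0 m n ε) := by
    intro β hβ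
    obtain ⟨⟨hw, hdiv⟩, h0, hcong⟩ := hβ
    have hβi : 2 * c ∣ β i := by
      have h1 := hcong i hi1 hi2
      rw [Function.update_self, zero_mul, hM] at h1
      exact (Nat.modEq_zero_iff_dvd).mp h1
    have hwu := binWeight_update β i (β i + c)
    have hweq : (binWeight (g β) : ℤ) = (n : ℤ) := by
      have : (binWeight (g β) : ℤ) + (β i : ℤ) * 2 ^ i
          = (binWeight β : ℤ) + ((β i : ℤ) + c) * 2 ^ i := by exact_mod_cast hwu
      have hc2 : (c : ℤ) * 2 ^ i = 2 ^ (m + 1) := by exact_mod_cast hcpow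
      rw [hw] at this
      linarith
    refine ⟨⟨hweq, ?_⟩, ?_, ?_⟩
    · intro j hj
      by_cases hji : j = i
      · subst hji
        have h1 : g β j = β j + c := by simp [hg]
        rw [h1]
        exact dvd_add (dvd_trans (dvd_mul_left c 2) hβi) dvd_rfl
      · have h1 : g β j = β j := by simp [hg, Finsupp.coe_update, Function.update_of_ne hji]
        rw [h1]; exact hdiv j hj
    · have h1 : g β 0 = β 0 := by
        simp [hg, Finsupp.coe_update, Function.update_of_ne (by omega : (0:ℕ) ≠ i)]
      rw [h1, h0]
    · intro j hj1 hj2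
      by_cases hji : j = i
      · subst hji
        have h1 : g β j = β j + c := by simp [hg]
        rw [h1, hεi, one_mul, hM]
        calc β j + c ≡ 0 + c [MOD 2 * c] :=
              Nat.ModEq.add_right c ((Nat.modEq_zero_iff_dvd).mpr hβi)
          _ = c := by omega
      · have h1 : g β j = β j := by simp [hg, Finsupp.coe_update, Function.update_of_ne hji]
        rw [h1]
        have := hcong j hj1 hj2
        rwa [Function.update_of_ne hji] at this
  have hinv : Set.InvOn g f (Pm0 m n ε) B := by
    constructor
    · intro α hα
      have hle' := hle α hα
      ext j
      by_cases hji : j = i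
      · subst hji
        simp [hg, hf, Finsupp.coe_update]
        omega
      · simp [hg, hf, Finsupp.coe_update, Function.update_of_ne hji]
    · intro β hβ
      ext j
      by_cases hji : j = i
      · subst hji
        simp [hg, hf, Finsupp.coe_update]
      · simp [hg, hf, Finsupp.coe_update, Function.update_of_ne hji]
  have hbij : Set.BijOn f (Pm0 m n ε) B := hinv.bijOn hmapsf hmapsg
  exact ⟨hbij, Nat.card_congr hbij.equiv⟩
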